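/- Under the conditions ‖e^{A_D t}‖ ≤ β e^{-αt} and max(‖K₁₂‖, ‖K₂₁‖) < √(2α)/β, the series P_q = Σ_{k≥1} P_q^{(k)} of level-k controllability Gramians (each positive semidefinite) converges absolutely for q ∈ {1,2}. -/

import Mathlib

open MeasureTheory Matrix Filter
open scoped Matrix.Norms.L2Operator

set_option maxHeartbeats 1600000

namespace GramianAux


noncomputable def transposeCLM (n : ℕ) :
    Matrix (Fin n) (Fin n) ℝ →L[ℝ] Matrix (Fin n) (Fin n) ℝ :=
  LinearMap.toContinuousLinearMap
    { toFun := fun M => Mᵀ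
      map_add' := fun a b => Matrix.transpose_add a b
      map_smul' := fun c a => Matrix.transpose_smul c a }

@[simp] lemma transposeCLM_apply {n : ℕ} (M : Matrix (Fin n) (Fin n) ℝ) :
    transposeCLM n M = Mᵀ := rfl

lemma exp_transpose' {n : ℕ} (A : Matrix (Fin n) (Fin n) ℝ) :
    NormedSpace.exp Aᵀ = (NormedSpace.exp A)ᵀ := by
  have hs : Summable fun k : ℕ => ((Nat.factorial k : ℝ))⁻¹ • A ^ k :=
    NormedSpace.expSeries_summable' (𝕂 := ℝ) A
  have h := (transposeCLM n).map_tsum hs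
  rw [NormedSpace.exp_eq_tsum ℝ]
  beta_reduce
  calc ∑' k : ℕ, ((Nat.factorial k : ℝ))⁻¹ • (Aᵀ) ^ k
      = ∑' k : ℕ, (transposeCLM n) (((Nat.factorial k : ℝ))⁻¹ • A ^ k) := by
        simp [Matrix.transpose_pow]
    _ = (transposeCLM n) (∑' k : ℕ, ((Nat.factorial k : ℝ))⁻¹ • A ^ k) := h.symm
    _ = (∑' k : ℕ, ((Nat.factorial k : ℝ))⁻¹ • A ^ k)ᵀ := rfl



noncomputable def blockDiagAlgHom (n₁ n₂ : ℕ) :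
    (Matrix (Fin n₁) (Fin n₁) ℝ × Matrix (Fin n₂) (Fin n₂) ℝ) →ₐ[ℝ]
      Matrix (Fin n₁ ⊕ Fin n₂) (Fin n₁ ⊕ Fin n₂) ℝ :=
  AlgHom.ofLinearMap
    { toFun := fun p => Matrix.fromBlocks p.1 0 0 p.2
      map_add' := by
        intro p q
        ext (i | i) (j | j) <;> simp [Matrix.fromBlocks]
      map_smul' := by
        intro c p
        ext (i | i) (j | j) <;> simp [Matrix.fromBlocks] }
    Matrix.fromBlocks_one
    (by
      intro p q
      simp only [LinearMap.coe_mk, AddHom.coe_mk]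
      rw [Matrix.fromBlocks_multiply]
      simp)

lemma exp_blockDiag {n₁ n₂ : ℕ} (A : Matrix (Fin n₁) (Fin n₁) ℝ)
    (B : Matrix (Fin n₂) (Fin n₂) ℝ) :
    NormedSpace.exp (Matrix.fromBlocks A 0 0 B)
      = Matrix.fromBlocks (NormedSpace.exp A) 0 0 (NormedSpace.exp B) := by
  letI : NormedAlgebra ℚ (Matrix (Fin n₁) (Fin n₁) ℝ) := NormedAlgebra.restrictScalars ℚ ℝ _
  letI : NormedAlgebra ℚ (Matrix (Fin n₂) (Fin n₂) ℝ) := NormedAlgebra.restrictScalars ℚ ℝ _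
  have hc : Continuous (blockDiagAlgHom n₁ n₂) :=
    (blockDiagAlgHom n₁ n₂).toLinearMap.continuous_of_finiteDimensional
  have h := NormedSpace.map_exp (blockDiagAlgHom n₁ n₂) hc (A, B)
  have hprod : NormedSpace.exp ((A, B) :
      Matrix (Fin n₁) (Fin n₁) ℝ × Matrix (Fin n₂) (Fin n₂) ℝ)
      = (NormedSpace.exp A, NormedSpace.exp B) :=
    Prod.ext (Prod.fst_exp (A, B)) (Prod.snd_exp (A, B))
  rw [hprod] at h
  exact h.symm

lemma norm_block_left_le {n₁ n₂ : ℕ} (X : Matrix (Fin n₁) (Fin n₁) ℝ)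
    (Y : Matrix (Fin n₂) (Fin n₂) ℝ) :
    ‖X‖ ≤ ‖Matrix.fromBlocks X 0 0 Y‖ := by
  rw [Matrix.l2_opNorm_def X]
  refine ContinuousLinearMap.opNorm_le_bound _ (norm_nonneg _) fun v => ?_
  set u : Fin n₁ → ℝ := (WithLp.equiv 2 (Fin n₁ → ℝ)) v with hu
  set w : EuclideanSpace ℝ (Fin n₁ ⊕ Fin n₂) :=
    (WithLp.equiv 2 ((Fin n₁ ⊕ Fin n₂) → ℝ)).symm (Sum.elim u 0) with hw
  have hwv : ‖w‖ = ‖v‖ := by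
    rw [EuclideanSpace.norm_eq, EuclideanSpace.norm_eq]
    congr 1
    rw [Fintype.sum_sum_type]
    simp [hw, hu]
  have happ : (Matrix.fromBlocks X 0 0 Y) *ᵥ (Sum.elim u 0) = Sum.elim (X *ᵥ u) 0 := by
    rw [Matrix.fromBlocks_mulVec]
    simp
  have hnorm_app :
      ‖(toEuclideanLin ≪≫ₗ LinearMap.toContinuousLinearMap) X v‖
        = ‖(toEuclideanLin ≪≫ₗ LinearMap.toContinuousLinearMap)
            (Matrix.fromBlocks X 0 0 Y) w‖ := by
    have h1 : ((toEuclideanLin ≪≫ₗ LinearMap.toContinuousLinearMap) X) v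
        = (WithLp.equiv 2 (Fin n₁ → ℝ)).symm (X *ᵥ u) := by
      rw [LinearEquiv.trans_apply, LinearMap.coe_toContinuousLinearMap',
        Matrix.toEuclideanLin_apply]
      rfl
    have h2 : ((toEuclideanLin ≪≫ₗ LinearMap.toContinuousLinearMap)
        (Matrix.fromBlocks X 0 0 Y)) w
        = (WithLp.equiv 2 ((Fin n₁ ⊕ Fin n₂) → ℝ)).symm (Sum.elim (X *ᵥ u) 0) := by
      rw [LinearEquiv.trans_apply, LinearMap.coe_toContinuousLinearMap', hw,
        WithLp.equiv_symm_apply, Matrix.toEuclideanLin_apply_piLp_toLp, happ]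
    rw [h1, h2, EuclideanSpace.norm_eq, EuclideanSpace.norm_eq]
    congr 1
    rw [Fintype.sum_sum_type]
    simp
  calc ‖(toEuclideanLin ≪≫ₗ LinearMap.toContinuousLinearMap) X v‖
      = ‖(toEuclideanLin ≪≫ₗ LinearMap.toContinuousLinearMap)
          (Matrix.fromBlocks X 0 0 Y) w‖ := hnorm_app
    _ ≤ ‖Matrix.fromBlocks X 0 0 Y‖ * ‖w‖ := by
        rw [Matrix.l2_opNorm_def]
        exact ContinuousLinearMap.le_opNorm _ _
    _ = ‖Matrix.fromBlocks X 0 0 Y‖ * ‖v‖ := by rw [hwv]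

lemma norm_block_right_le {n₁ n₂ : ℕ} (X : Matrix (Fin n₁) (Fin n₁) ℝ)
    (Y : Matrix (Fin n₂) (Fin n₂) ℝ) :
    ‖Y‖ ≤ ‖Matrix.fromBlocks X 0 0 Y‖ := by
  rw [Matrix.l2_opNorm_def Y]
  refine ContinuousLinearMap.opNorm_le_bound _ (norm_nonneg _) fun v => ?_
  set u : Fin n₂ → ℝ := (WithLp.equiv 2 (Fin n₂ → ℝ)) v with hu
  set w : EuclideanSpace ℝ (Fin n₁ ⊕ Fin n₂) :=
    (WithLp.equiv 2 ((Fin n₁ ⊕ Fin n₂) → ℝ)).symm (Sum.elim (0 : Fin n₁ → ℝ) u) with hw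
  have hwv : ‖w‖ = ‖v‖ := by
    rw [EuclideanSpace.norm_eq, EuclideanSpace.norm_eq]
    congr 1
    rw [Fintype.sum_sum_type]
    simp [hw, hu]
  have happ : (Matrix.fromBlocks X 0 0 Y) *ᵥ (Sum.elim (0 : Fin n₁ → ℝ) u) = Sum.elim (0 : Fin n₁ → ℝ) (Y *ᵥ u) := by
    rw [Matrix.fromBlocks_mulVec]
    simp
  have hnorm_app :
      ‖(toEuclideanLin ≪≫ₗ LinearMap.toContinuousLinearMap) Y v‖
        = ‖(toEuclideanLin ≪≫ₗ LinearMap.toContinuousLinearMap)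
            (Matrix.fromBlocks X 0 0 Y) w‖ := by
    have h1 : ((toEuclideanLin ≪≫ₗ LinearMap.toContinuousLinearMap) Y) v
        = (WithLp.equiv 2 (Fin n₂ → ℝ)).symm (Y *ᵥ u) := by
      rw [LinearEquiv.trans_apply, LinearMap.coe_toContinuousLinearMap',
        Matrix.toEuclideanLin_apply]
      rfl
    have h2 : ((toEuclideanLin ≪≫ₗ LinearMap.toContinuousLinearMap)
        (Matrix.fromBlocks X 0 0 Y)) w
        = (WithLp.equiv 2 ((Fin n₁ ⊕ Fin n₂) → ℝ)).symm (Sum.elim (0 : Fin n₁ → ℝ) (Y *ᵥ u)) := by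
      rw [LinearEquiv.trans_apply, LinearMap.coe_toContinuousLinearMap', hw,
        WithLp.equiv_symm_apply, Matrix.toEuclideanLin_apply_piLp_toLp, happ]
    rw [h1, h2, EuclideanSpace.norm_eq, EuclideanSpace.norm_eq]
    congr 1
    rw [Fintype.sum_sum_type]
    simp
  calc ‖(toEuclideanLin ≪≫ₗ LinearMap.toContinuousLinearMap) Y v‖
      = ‖(toEuclideanLin ≪≫ₗ LinearMap.toContinuousLinearMap)
          (Matrix.fromBlocks X 0 0 Y) w‖ := hnorm_app
    _ ≤ ‖Matrix.fromBlocks X 0 0 Y‖ * ‖w‖ := by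
        rw [Matrix.l2_opNorm_def]
        exact ContinuousLinearMap.le_opNorm _ _
    _ = ‖Matrix.fromBlocks X 0 0 Y‖ * ‖v‖ := by rw [hwv]



lemma integral_exp_neg_mul (b : ℝ) (hb : 0 < b) :
    ∫ t in Set.Ioi (0:ℝ), Real.exp (-b * t) = 1 / b := by
  have hderiv : ∀ x ∈ Set.Ioi (0:ℝ),
      HasDerivAt (fun t : ℝ => -(1 / b) * Real.exp (-b * t)) (Real.exp (-b * x)) x := by
    intro x _
    have h1 : HasDerivAt (fun t : ℝ => -b * t) (-b) x := by
      simpa using (hasDerivAt_id x).const_mul (-b)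
    have h2 := h1.exp
    have h3 := h2.const_mul (-(1 / b))
    convert h3 using 1
    · rfl
    · rfl
    field_simp
  have hint : IntegrableOn (fun t : ℝ => Real.exp (-b * t)) (Set.Ioi (0:ℝ)) :=
    exp_neg_integrableOn_Ioi 0 hb
  have htend : Tendsto (fun t : ℝ => -(1 / b) * Real.exp (-b * t)) atTop (nhds 0) := by
    have h1 : Tendsto (fun t : ℝ => -b * t) atTop atBot :=
      Tendsto.const_mul_atTop_of_neg (neg_neg_iff_pos.mpr hb) tendsto_id
    have h2 : Tendsto (fun t : ℝ => Real.exp (-b * t)) atTop (nhds 0) :=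
      Real.tendsto_exp_atBot.comp h1
    simpa using h2.const_mul (-(1 / b))
  have hcont : ContinuousWithinAt (fun t : ℝ => -(1 / b) * Real.exp (-b * t))
      (Set.Ici (0:ℝ)) 0 := by
    apply Continuous.continuousWithinAt
    continuity
  have := integral_Ioi_of_hasDerivAt_of_tendsto hcont hderiv hint htend
  rw [this]
  simp

lemma gram_integral_norm_le {n p : ℕ} (A : Matrix (Fin n) (Fin n) ℝ)
    (K : Matrix (Fin n) (Fin p) ℝ) (M : Matrix (Fin p) (Fin p) ℝ) {α β : ℝ}
    (hα : 0 < α) (hβ : 0 ≤ β)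
    (hE : ∀ t : ℝ, 0 ≤ t → ‖NormedSpace.exp (t • A)‖ ≤ β * Real.exp (-α * t)) :
    ‖∫ t in Set.Ioi (0:ℝ),
        NormedSpace.exp (t • A) * K * M * Kᵀ * NormedSpace.exp (t • Aᵀ)‖
      ≤ β ^ 2 * ‖K‖ ^ 2 * (1 / (2 * α)) * ‖M‖ := by
  set C : ℝ := β ^ 2 * ‖K‖ ^ 2 * ‖M‖ with hC
  have hC0 : 0 ≤ C := by positivity
  have hg : Integrable (fun t : ℝ => C * Real.exp (-(2 * α) * t))
      (volume.restrict (Set.Ioi (0:ℝ))) :=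
    (exp_neg_integrableOn_Ioi 0 (by positivity)).const_mul C
  have hbound : ∀ᵐ t ∂(volume.restrict (Set.Ioi (0:ℝ))),
      ‖NormedSpace.exp (t • A) * K * M * Kᵀ * NormedSpace.exp (t • Aᵀ)‖
        ≤ C * Real.exp (-(2 * α) * t) := by
    filter_upwards [ae_restrict_mem measurableSet_Ioi] with t ht
    have ht0 : (0:ℝ) ≤ t := le_of_lt ht
    set E := NormedSpace.exp (t • A) with hEdef
    have hET : NormedSpace.exp (t • Aᵀ) = Eᵀ := by
      rw [← Matrix.transpose_smul, exp_transpose']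
    have hEnorm : ‖E‖ ≤ β * Real.exp (-α * t) := hE t ht0
    have hTnorm : ‖Eᵀ‖ = ‖E‖ := by
      rw [← Matrix.conjTranspose_eq_transpose_of_trivial, Matrix.l2_opNorm_conjTranspose]
    have hKT : ‖Kᵀ‖ = ‖K‖ := by
      rw [← Matrix.conjTranspose_eq_transpose_of_trivial, Matrix.l2_opNorm_conjTranspose]
    have hEnn : 0 ≤ ‖E‖ := norm_nonneg _
    rw [hET]
    have step : ‖E * K * M * Kᵀ * Eᵀ‖ ≤ ‖E‖ * ‖K‖ * ‖M‖ * ‖K‖ * ‖E‖ := by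
      calc ‖E * K * M * Kᵀ * Eᵀ‖ ≤ ‖E * K * M * Kᵀ‖ * ‖Eᵀ‖ := Matrix.l2_opNorm_mul _ _
        _ ≤ (‖E * K * M‖ * ‖Kᵀ‖) * ‖Eᵀ‖ := by
            gcongr
            exact Matrix.l2_opNorm_mul _ _
        _ ≤ ((‖E * K‖ * ‖M‖) * ‖Kᵀ‖) * ‖Eᵀ‖ := by
            gcongr
            exact Matrix.l2_opNorm_mul _ _
        _ ≤ (((‖E‖ * ‖K‖) * ‖M‖) * ‖Kᵀ‖) * ‖Eᵀ‖ := by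
            gcongr
            exact Matrix.l2_opNorm_mul _ _
        _ = ‖E‖ * ‖K‖ * ‖M‖ * ‖K‖ * ‖E‖ := by rw [hKT, hTnorm]
    refine step.trans ?_
    have hexp : Real.exp (-α * t) * Real.exp (-α * t) = Real.exp (-(2 * α) * t) := by
      rw [← Real.exp_add]
      ring_nf
    calc ‖E‖ * ‖K‖ * ‖M‖ * ‖K‖ * ‖E‖
        = (‖E‖ * ‖E‖) * (‖K‖ ^ 2 * ‖M‖) := by ring
      _ ≤ ((β * Real.exp (-α * t)) * (β * Real.exp (-α * t))) * (‖K‖ ^ 2 * ‖M‖) := by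
          have h := mul_le_mul hEnorm hEnorm hEnn (by positivity)
          exact mul_le_mul_of_nonneg_right h (by positivity)
      _ = C * Real.exp (-(2 * α) * t) := by
          rw [hC]
          rw [← hexp]
          ring
  have h := norm_integral_le_of_norm_le hg hbound
  refine h.trans ?_
  rw [MeasureTheory.integral_const_mul, integral_exp_neg_mul (2 * α) (by positivity)]
  rw [hC]
  ring_nf
  exact le_refl _


end GramianAux

/-- Under the stability bound `‖e^{A_D t}‖ ≤ β e^{-α t}` on the block-diagonal matrix
`A_D = blkdiag(A₁, A₂)` and the smallness condition `max(‖K₁₂‖, ‖K₂₁‖) < √(2α)/β` on the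
coupling matrices, the series `P_q = Σ_{k ≥ 1} P_q^{(k)}` of level-`k` controllability
Gramians (each positive semidefinite) converge absolutely for `q ∈ {1, 2}`. -/
theorem level_k_gramian_series_summable {n₁ n₂ m : ℕ}
    (A₁ : Matrix (Fin n₁) (Fin n₁) ℝ) (A₂ : Matrix (Fin n₂) (Fin n₂) ℝ)
    (K₂₁ : Matrix (Fin n₁) (Fin n₂) ℝ) (K₁₂ : Matrix (Fin n₂) (Fin n₁) ℝ)
    (B₁ : Matrix (Fin n₁) (Fin m) ℝ) (B₂ : Matrix (Fin n₂) (Fin m) ℝ)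
    (α β : ℝ) (hα : 0 < α) (hβ : 0 < β)
    (hbound : ∀ t : ℝ, 0 ≤ t →
      ‖NormedSpace.exp (t • Matrix.fromBlocks A₁ 0 0 A₂)‖ ≤ β * Real.exp (-α * t))
    (hK : max ‖K₁₂‖ ‖K₂₁‖ < Real.sqrt (2 * α) / β)
    (P₁ : ℕ → Matrix (Fin n₁) (Fin n₁) ℝ) (P₂ : ℕ → Matrix (Fin n₂) (Fin n₂) ℝ)
    (hpsd₁ : ∀ k, (P₁ k).PosSemidef) (hpsd₂ : ∀ k, (P₂ k).PosSemidef)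
    (hbase₁ : P₁ 1 = ∫ t in Set.Ioi (0:ℝ),
        NormedSpace.exp (t • A₁) * B₁ * B₁ᵀ * NormedSpace.exp (t • A₁ᵀ))
    (hbase₂ : P₂ 1 = ∫ t in Set.Ioi (0:ℝ),
        NormedSpace.exp (t • A₂) * B₂ * B₂ᵀ * NormedSpace.exp (t • A₂ᵀ))
    (hrec₁ : ∀ k ≥ 1, P₁ (k + 1) = ∫ t in Set.Ioi (0:ℝ),
        NormedSpace.exp (t • A₁) * K₂₁ * P₂ k * K₂₁ᵀ * NormedSpace.exp (t • A₁ᵀ))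
    (hrec₂ : ∀ k ≥ 1, P₂ (k + 1) = ∫ t in Set.Ioi (0:ℝ),
        NormedSpace.exp (t • A₂) * K₁₂ * P₁ k * K₁₂ᵀ * NormedSpace.exp (t • A₂ᵀ)) :
    Summable (fun k : ℕ => ‖P₁ (k + 1)‖) ∧ Summable (fun k : ℕ => ‖P₂ (k + 1)‖) := by
  classical
  set Kc : ℝ := max ‖K₁₂‖ ‖K₂₁‖ with hKc
  have hKc0 : 0 ≤ Kc := le_trans (norm_nonneg K₁₂) (le_max_left _ _)
  set r : ℝ := β ^ 2 * Kc ^ 2 * (1 / (2 * α)) with hr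
  have h2α : (0:ℝ) < 2 * α := by positivity
  have hr0 : 0 ≤ r := by positivity
  have hr1 : r < 1 := by
    have hβK : Kc * β < Real.sqrt (2 * α) := by
      rw [lt_div_iff₀ hβ] at hK
      exact hK
    have hsq : (Kc * β) * (Kc * β) < 2 * α := by
      have h := mul_self_lt_mul_self (by positivity) hβK
      rwa [Real.mul_self_sqrt h2α.le] at h
    have : r = ((Kc * β) * (Kc * β)) * (1 / (2 * α)) := by rw [hr]; ring
    rw [this]
    rw [mul_one_div, div_lt_one h2α]
    exact hsq
  have hE₁ : ∀ t : ℝ, 0 ≤ t → ‖NormedSpace.exp (t • A₁)‖ ≤ β * Real.exp (-α * t) := by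
    intro t ht
    have hb := hbound t ht
    have hsm : t • Matrix.fromBlocks A₁ 0 0 A₂
        = Matrix.fromBlocks (t • A₁) 0 0 (t • A₂) := by
      rw [Matrix.fromBlocks_smul]
      simp
    rw [hsm, GramianAux.exp_blockDiag] at hb
    exact le_trans (GramianAux.norm_block_left_le _ _) hb
  have hE₂ : ∀ t : ℝ, 0 ≤ t → ‖NormedSpace.exp (t • A₂)‖ ≤ β * Real.exp (-α * t) := by
    intro t ht
    have hb := hbound t ht
    have hsm : t • Matrix.fromBlocks A₁ 0 0 A₂
        = Matrix.fromBlocks (t • A₁) 0 0 (t • A₂) := by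
      rw [Matrix.fromBlocks_smul]
      simp
    rw [hsm, GramianAux.exp_blockDiag] at hb
    exact le_trans (GramianAux.norm_block_right_le _ _) hb
  have hstep₁ : ∀ k, 1 ≤ k → ‖P₁ (k + 1)‖ ≤ r * ‖P₂ k‖ := by
    intro k hk
    rw [hrec₁ k hk]
    refine (GramianAux.gram_integral_norm_le A₁ K₂₁ (P₂ k) hα hβ.le hE₁).trans ?_
    apply mul_le_mul_of_nonneg_right _ (norm_nonneg _)
    rw [hr]
    gcongr
    exact le_max_right _ _
  have hstep₂ : ∀ k, 1 ≤ k → ‖P₂ (k + 1)‖ ≤ r * ‖P₁ k‖ := by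
    intro k hk
    rw [hrec₂ k hk]
    refine (GramianAux.gram_integral_norm_le A₂ K₁₂ (P₁ k) hα hβ.le hE₂).trans ?_
    apply mul_le_mul_of_nonneg_right _ (norm_nonneg _)
    rw [hr]
    gcongr
    exact le_max_left _ _
  set Cst : ℝ := max ‖P₁ 1‖ ‖P₂ 1‖ with hCst
  have hclaim : ∀ k : ℕ, ‖P₁ (k + 1)‖ ≤ Cst * r ^ k ∧ ‖P₂ (k + 1)‖ ≤ Cst * r ^ k := by
    intro k
    induction k with
    | zero =>
      constructor
      · rw [pow_zero, mul_one]
        exact le_max_left ‖P₁ 1‖ ‖P₂ 1‖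
      · rw [pow_zero, mul_one]
        exact le_max_right ‖P₁ 1‖ ‖P₂ 1‖
    | succ k ih =>
      constructor
      · refine (hstep₁ (k + 1) (by omega)).trans ?_
        calc r * ‖P₂ (k + 1)‖ ≤ r * (Cst * r ^ k) :=
              mul_le_mul_of_nonneg_left ih.2 hr0
          _ = Cst * r ^ (k + 1) := by ring
      · refine (hstep₂ (k + 1) (by omega)).trans ?_
        calc r * ‖P₁ (k + 1)‖ ≤ r * (Cst * r ^ k) :=
              mul_le_mul_of_nonneg_left ih.1 hr0
          _ = Cst * r ^ (k + 1) := by ring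
  have hgeo : Summable (fun k : ℕ => Cst * r ^ k) :=
    (summable_geometric_of_lt_one hr0 hr1).mul_left Cst
  exact ⟨Summable.of_nonneg_of_le (fun k => norm_nonneg _) (fun k => (hclaim k).1) hgeo,
    Summable.of_nonneg_of_le (fun k => norm_nonneg _) (fun k => (hclaim k).2) hgeo⟩
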